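/- Let B : X₀ → X₀ be a continuous linear operator on a real Banach space X₀ possessing a regular skeleton chain of length p (real Banach spaces X₀,…,X_p, operators A_{2i} : X_{i−1} → X_i, A_{2i−1} : X_i → X_{i−1} with B = A₁ ∘ A₂, A_{2i} ∘ A_{2i−1} = A_{2i+1} ∘ A_{2i+2} for i = 1,…,p−1, and B^p = A_{2p} ∘ A_{2p−1} continuously invertible), let M := A_{2p} ∘ ⋯ ∘ A₂, and let f : ℝ → X₀ be p times differentiable. For c₀ ∈ X_p let x(·; c₀) denote the unique differentiable solution of B(x'(t)) = x(t) + f(t) with M(x(0)) = c₀. Then the solution depends continuously on c₀: for every t ∈ ℝ there is a constant C(t) ≥ 0 such that ‖x(t; c₀) − x(t; c₁)‖ ≤ C(t) ‖c₀ − c₁‖ for all c₀, c₁ ∈ X_p; in particular, for each t the map c₀ ↦ x(t; c₀) is continuous. -/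

import Mathlib

open ContinuousLinearMap

/-- The composition `M_k = A_{2k} ∘ A_{2(k-1)} ∘ ⋯ ∘ A₂ : X₀ → X_k` built from the
forward operators `Af k = A_{2(k+1)} : X_k → X_{k+1}` of a skeleton chain. -/
noncomputable def chainComp {X : ℕ → Type*} [∀ n, NormedAddCommGroup (X n)]
    [∀ n, NormedSpace ℝ (X n)] (Af : ∀ k : ℕ, X k →L[ℝ] X (k + 1)) :
    ∀ k : ℕ, X 0 →L[ℝ] X k
  | 0 => ContinuousLinearMap.id ℝ (X 0)
  | (k + 1) => (Af k).comp (chainComp Af k)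

set_option maxHeartbeats 1000000
set_option synthInstance.maxHeartbeats 200000

noncomputable def bcomp {X : ℕ → Type*} [∀ n, NormedAddCommGroup (X n)]
    [∀ n, NormedSpace ℝ (X n)] (Ab : ∀ k : ℕ, X (k + 1) →L[ℝ] X k) (p : ℕ) :
    ∀ k : ℕ, X p →L[ℝ] X k := fun k =>
  if h : k < p then (Ab k).comp (bcomp Ab p (k + 1))
  else if h2 : k = p then cast (by rw [h2]) (ContinuousLinearMap.id ℝ (X p)) else 0
termination_by k => p - k
decreasing_by omega

lemma bcomp_self {X : ℕ → Type*} [∀ n, NormedAddCommGroup (X n)]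
    [∀ n, NormedSpace ℝ (X n)] (Ab : ∀ k : ℕ, X (k + 1) →L[ℝ] X k) (p : ℕ) :
    bcomp Ab p p = ContinuousLinearMap.id ℝ (X p) := by
  rw [bcomp]; simp

lemma bcomp_lt {X : ℕ → Type*} [∀ n, NormedAddCommGroup (X n)]
    [∀ n, NormedSpace ℝ (X n)] (Ab : ∀ k : ℕ, X (k + 1) →L[ℝ] X k) {p k : ℕ} (h : k < p) :
    bcomp Ab p k = (Ab k).comp (bcomp Ab p (k + 1)) := by
  rw [bcomp]; simp [h]

/-- continuous dependence on the regularized initial data: for a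
regular skeleton chain of length `p = q + 1 ≥ 1` and a `p` times differentiable
`f`, if `sol c` denotes the (unique) differentiable solution of `B x' = x + f`
with `M x(0) = c`, then for every `t` there is `C t ≥ 0` with
`‖sol c₀ t - sol c₁ t‖ ≤ C t * ‖c₀ - c₁‖`; in particular `c ↦ sol c t` is
continuous.
Here `Af k = A_{2(k+1)} : X_k → X_{k+1}` and `Ab k = A_{2k+1} : X_{k+1} → X_k`,
and `M = chainComp Af p`. -/
theorem stmt16
    {X : ℕ → Type*} [∀ n, NormedAddCommGroup (X n)] [∀ n, NormedSpace ℝ (X n)]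
    [∀ n, CompleteSpace (X n)]
    (p q : ℕ) (hp : p = q + 1)
    (Af : ∀ k : ℕ, X k →L[ℝ] X (k + 1)) (Ab : ∀ k : ℕ, X (k + 1) →L[ℝ] X k)
    (B : X 0 →L[ℝ] X 0) (hB : B = (Ab 0).comp (Af 0))
    (hchain : ∀ k : ℕ, k + 1 < p → (Af k).comp (Ab k) = (Ab (k + 1)).comp (Af (k + 1)))
    (hreg : IsUnit ((Af q).comp (Ab q) : X (q + 1) →L[ℝ] X (q + 1)))
    (f : ℝ → X 0) (hf : ∀ k < p, Differentiable ℝ (iteratedDeriv k f))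
    (sol : X p → ℝ → X 0)
    (hsol : ∀ c : X p, Differentiable ℝ (sol c) ∧
      (∀ t : ℝ, B (deriv (sol c) t) = sol c t + f t) ∧
      chainComp Af p (sol c 0) = c) :
    ∀ t : ℝ, (∃ C : ℝ, 0 ≤ C ∧
        ∀ c₀ c₁ : X p, ‖sol c₀ t - sol c₁ t‖ ≤ C * ‖c₀ - c₁‖) ∧
      Continuous (fun c : X p => sol c t) := by
  subst hp
  obtain ⟨u, hu⟩ := hreg
  set Bp : X (q + 1) →L[ℝ] X (q + 1) := (Af q).comp (Ab q) with hBp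
  set L : X (q + 1) →L[ℝ] X (q + 1) := ↑u⁻¹ with hL
  have hLBp : ∀ x, L (Bp x) = x := by
    intro x
    have h1 : L * Bp = 1 := by rw [hL, ← hu]; exact u.inv_mul
    calc L (Bp x) = (L * Bp) x := rfl
      _ = x := by rw [h1]; rfl
  -- commutation of chainComp with B
  have MkB : ∀ k, k < q + 1 → ∀ x, chainComp Af (k + 1) (B x)
      = Af k (Ab k (chainComp Af (k + 1) x)) := by
    intro k
    induction k with
    | zero =>
      intro _ x
      show Af 0 (chainComp Af 0 (B x)) = _
      simp [chainComp, hB]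
    | succ k ih =>
      intro hk x
      have e1 : chainComp Af (k + 2) (B x) = Af (k + 1) (chainComp Af (k + 1) (B x)) := rfl
      rw [e1, ih (by omega) x]
      have h2 : ∀ y, Af k (Ab k y) = Ab (k + 1) (Af (k + 1) y) := by
        intro y
        have := congrArg (fun T : X (k + 1) →L[ℝ] X (k + 1) => T y) (hchain k hk)
        simpa using this
      rw [h2]
      rfl
  -- the key formula
  have key : ∀ (c₀ c₁ : X (q + 1)) (t : ℝ), sol c₀ t - sol c₁ t
      = bcomp Ab (q + 1) 0 ((L ^ (q + 1) * NormedSpace.exp (t • L)) (c₀ - c₁)) := by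
    intro c₀ c₁
    obtain ⟨hd0, he0, hi0⟩ := hsol c₀
    obtain ⟨hd1, he1, hi1⟩ := hsol c₁
    set y : ℝ → X 0 := fun t => sol c₀ t - sol c₁ t with hy
    have hyd : Differentiable ℝ y := hd0.sub hd1
    have hyB : ∀ t, B (deriv y t) = y t := by
      intro t
      have hdsub : deriv y t = deriv (sol c₀) t - deriv (sol c₁) t :=
        deriv_sub (hd0 t) (hd1 t)
      rw [hdsub, map_sub, he0, he1]
      simp only [hy]
      abel
    set z : ∀ k, ℝ → X k := fun k t => chainComp Af k (y t) with hz
    have hzd : ∀ k, Differentiable ℝ (z k) := fun k =>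
      ((chainComp Af k).differentiable.comp hyd : _)
    have hzderiv : ∀ k t, deriv (z k) t = chainComp Af k (deriv y t) := by
      intro k t
      exact (((chainComp Af k).hasFDerivAt).comp_hasDerivAt t (hyd t).hasDerivAt).deriv
    have hzB : ∀ k t, z (k + 1) t = chainComp Af (k + 1) (B (deriv y t)) := by
      intro k t
      rw [hyB t]
    -- descent relation
    have descent : ∀ k, k < q + 1 → ∀ t, z k t = Ab k (deriv (z (k + 1)) t) := by
      intro k hk t
      match k with
      | 0 =>
        have : z 0 t = y t := rfl
        rw [this, ← hyB t, hB, hzderiv]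
        rfl
      | (m + 1) =>
        rw [hzB m t, MkB m (by omega)]
        have h2 : ∀ w, Af m (Ab m w) = Ab (m + 1) (Af (m + 1) w) := by
          intro w
          have := congrArg (fun T : X (m + 1) →L[ℝ] X (m + 1) => T w) (hchain m hk)
          simpa using this
        rw [h2, hzderiv]
        rfl
    -- top-level ODE
    have top : ∀ t, deriv (z (q + 1)) t = L (z (q + 1) t) := by
      intro t
      have h1 : z (q + 1) t = Bp (deriv (z (q + 1)) t) := by
        rw [hzB q t, MkB q (by omega), hzderiv]
        rfl
      rw [h1, hLBp]
    have hz0 : z (q + 1) 0 = c₀ - c₁ := by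
      have : z (q + 1) 0 = chainComp Af (q + 1) (sol c₀ 0 - sol c₁ 0) := rfl
      rw [this, map_sub, hi0, hi1]
    -- exponential formula at top level
    have hexp : ∀ t, z (q + 1) t = NormedSpace.exp (t • L) (c₀ - c₁) := by
      set g : ℝ → X (q + 1) := fun t => NormedSpace.exp ((-t) • L) (z (q + 1) t) with hg
      have hgderiv : ∀ t, HasDerivAt g 0 t := by
        intro t
        have h1 : HasDerivAt (fun s : ℝ => NormedSpace.exp (s • L))
            (L * NormedSpace.exp ((-t) • L)) (-t) := hasDerivAt_exp_smul_const' L (-t)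
        have h2 : HasDerivAt (fun s : ℝ => NormedSpace.exp ((-s) • L))
            (-(L * NormedSpace.exp ((-t) • L))) t := by
          have h := HasDerivAt.scomp t h1 (hasDerivAt_neg t)
          rw [neg_one_smul] at h
          exact h
        have h3 : HasDerivAt (z (q + 1)) (L (z (q + 1) t)) t := by
          rw [← top t]
          exact ((hzd (q + 1)) t).hasDerivAt
        have h4 := h2.clm_apply h3
        have hcomm : NormedSpace.exp ((-t) • L) * L = L * NormedSpace.exp ((-t) • L) := by
          have : Commute L ((-t) • L) := (Commute.refl L).smul_right (-t)
          exact (this.exp_right).symm.eq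
        have h5 : NormedSpace.exp ((-t) • L) (L (z (q + 1) t))
            = (L * NormedSpace.exp ((-t) • L)) (z (q + 1) t) := by
          rw [← hcomm]; rfl
        have h6 : (-(L * NormedSpace.exp ((-t) • L))) (z (q + 1) t)
              + NormedSpace.exp ((-t) • L) (L (z (q + 1) t)) = 0 := by
          rw [h5]
          simp
        rw [← h6]
        exact h4
      have hgd : Differentiable ℝ g := fun t => (hgderiv t).differentiableAt
      have hgc : ∀ t, g t = g 0 := by
        intro t
        exact is_const_of_deriv_eq_zero hgd (fun s => (hgderiv s).deriv) t 0
      intro t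
      have hg0 : g 0 = c₀ - c₁ := by
        rw [hg]
        simp only [neg_zero, zero_smul, NormedSpace.exp_zero]
        rw [hz0]
        rfl
      have hmul : NormedSpace.exp (t • L) * NormedSpace.exp ((-t) • L) = 1 := by
        rw [← NormedSpace.exp_add_of_commute_of_mem_ball (𝕂 := ℝ) (𝔸 := X (q + 1) →L[ℝ] X (q + 1)) (((Commute.refl L).smul_left t).smul_right (-t)) ((NormedSpace.expSeries_radius_eq_top ℝ (X (q + 1) →L[ℝ] X (q + 1))).symm ▸ edist_lt_top _ _) ((NormedSpace.expSeries_radius_eq_top ℝ (X (q + 1) →L[ℝ] X (q + 1))).symm ▸ edist_lt_top _ _)]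
        rw [← add_smul]
        simp
      calc z (q + 1) t = (NormedSpace.exp (t • L) * NormedSpace.exp ((-t) • L))
            (z (q + 1) t) := by rw [hmul]; rfl
        _ = NormedSpace.exp (t • L) (g t) := rfl
        _ = NormedSpace.exp (t • L) (c₀ - c₁) := by rw [hgc t, hg0]
    -- downward induction
    have main : ∀ j k, k + j = q + 1 → ∀ t, z k t
        = bcomp Ab (q + 1) k ((L ^ j * NormedSpace.exp (t • L)) (c₀ - c₁)) := by
      intro j
      induction j with
      | zero =>
        intro k hk t
        obtain rfl : k = q + 1 := by omega
        rw [bcomp_self, hexp t]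
        simp
      | succ j ih =>
        intro k hk t
        have hklt : k < q + 1 := by omega
        have h1 : z (k + 1) = fun t => bcomp Ab (q + 1) (k + 1)
            ((L ^ j * NormedSpace.exp (t • L)) (c₀ - c₁)) :=
          funext (ih (k + 1) (by omega))
        have hder : deriv (z (k + 1)) t = bcomp Ab (q + 1) (k + 1)
            ((L ^ j * (L * NormedSpace.exp (t • L))) (c₀ - c₁)) := by
          have hE : HasDerivAt (fun s : ℝ => NormedSpace.exp (s • L))
              (L * NormedSpace.exp (t • L)) t := hasDerivAt_exp_smul_const' L t
          have hE2 : HasDerivAt (fun s : ℝ => L ^ j * NormedSpace.exp (s • L))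
              (L ^ j * (L * NormedSpace.exp (t • L))) t := by
            have h := (ContinuousLinearMap.mul ℝ (X (q + 1) →L[ℝ] X (q + 1)) (L ^ j)).hasFDerivAt.comp_hasDerivAt t hE
            exact h
          have hE3 : HasDerivAt (fun s : ℝ => (L ^ j * NormedSpace.exp (s • L)) (c₀ - c₁))
              ((L ^ j * (L * NormedSpace.exp (t • L))) (c₀ - c₁)) t := by
            have := hE2.clm_apply (hasDerivAt_const t (c₀ - c₁))
            simpa using this
          have hE4 : HasDerivAt (fun s : ℝ => bcomp Ab (q + 1) (k + 1)
              ((L ^ j * NormedSpace.exp (s • L)) (c₀ - c₁)))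
              (bcomp Ab (q + 1) (k + 1)
                ((L ^ j * (L * NormedSpace.exp (t • L))) (c₀ - c₁))) t :=
            (bcomp Ab (q + 1) (k + 1)).hasFDerivAt.comp_hasDerivAt t hE3
          rw [h1]
          exact hE4.deriv
        rw [descent k hklt t, hder, bcomp_lt Ab hklt]
        have : L ^ (j + 1) * NormedSpace.exp (t • L)
            = L ^ j * (L * NormedSpace.exp (t • L)) := by
          rw [pow_succ, mul_assoc]
        rw [this]
        rfl
    intro t
    have := main (q + 1) 0 (by omega) t
    exact this
  -- conclusion
  intro t
  set T : X (q + 1) →L[ℝ] X 0 :=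
    (bcomp Ab (q + 1) 0).comp (L ^ (q + 1) * NormedSpace.exp (t • L)) with hT
  have hTkey : ∀ c₀ c₁ : X (q + 1), sol c₀ t - sol c₁ t = T (c₀ - c₁) := by
    intro c₀ c₁
    exact key c₀ c₁ t
  constructor
  · refine ⟨‖T‖, norm_nonneg _, fun c₀ c₁ => ?_⟩
    rw [hTkey]
    exact T.le_opNorm _
  · have hfun : (fun c : X (q + 1) => sol c t) = fun c => T c + sol (0 : X (q + 1)) t := by
      funext c
      have h := hTkey c 0
      rw [sub_zero] at h
      exact eq_add_of_sub_eq h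
    rw [hfun]
    exact (T.continuous.add continuous_const)
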